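/- arXiv:1502.03729 — 4 statements merged into one kernel-verified Lean document; each statement's English description precedes it below -/
import Mathlib

section
/- Let F, Θ be N×N complex matrices, G an N×M complex matrix, H an M×N complex matrix, F_c, P₃ be N_c×N_c complex matrices, G_c an N_c×M complex matrix, H_c an M×N_c complex matrix, L a p×M complex matrix, and C a 1×N complex matrix. Assume: (i) Θ and P₃ are Hermitian; (ii) FΘ + ΘF† + GG† = 0 and G = −ΘH† (plant physical realizability); (iii) F_cP₃ + P₃F_c† + G_cG_c† − (G_c + P₃H_c†) L† L (G_c + P₃H_c†)† = 0. Define the augmented matrices F_a = [[F, 0], [G_cH, F_c]], G_a = [G; G_c], H_a = [H H_c], and P̃ = diag(Θ, P₃). Then P̃ satisfies the augmented algebraic Riccati equation F_aP̃ + P̃F_a† + G_aG_a† − (G_a + P̃H_a†) L† L (G_a + P̃H_a†)† = 0, and the corresponding estimation error cost satisfies [C 0] P̃ [C 0]† = CΘC†. -/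
open Matrix

lemma fromRows_add' {m₁ m₂ n : Type*} (A₁ C₁ : Matrix m₁ n ℂ) (A₂ C₂ : Matrix m₂ n ℂ) :
    fromRows A₁ A₂ + fromRows C₁ C₂ = fromRows (A₁ + C₁) (A₂ + C₂) := by
  ext (i | i) j <;> simp [fromRows_apply_inl, fromRows_apply_inr]

/-- Algebraic core of the paper's Theorem 3: the block-diagonal
matrix diag(Θ, P₃) solves the augmented Riccati equation for the
coherent-classical estimation scheme without feedback, and the
coherent-classical cost equals the purely-classical cost CΘC†. -/
theorem coherent_classical_no_feedback_cost
    (N M Nc p : ℕ)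
    (F Θ : Matrix (Fin N) (Fin N) ℂ)
    (G : Matrix (Fin N) (Fin M) ℂ)
    (H : Matrix (Fin M) (Fin N) ℂ)
    (Fc P₃ : Matrix (Fin Nc) (Fin Nc) ℂ)
    (Gc : Matrix (Fin Nc) (Fin M) ℂ)
    (Hc : Matrix (Fin M) (Fin Nc) ℂ)
    (L : Matrix (Fin p) (Fin M) ℂ)
    (C : Matrix (Fin 1) (Fin N) ℂ)
    (hΘ : Θ.IsHermitian) (hP₃ : P₃.IsHermitian)
    (h1 : F * Θ + Θ * Fᴴ + G * Gᴴ = 0)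
    (h2 : G = -(Θ * Hᴴ))
    (h3 : Fc * P₃ + P₃ * Fcᴴ + Gc * Gcᴴ -
      (Gc + P₃ * Hcᴴ) * Lᴴ * L * (Gc + P₃ * Hcᴴ)ᴴ = 0) :
    let Fa : Matrix (Fin N ⊕ Fin Nc) (Fin N ⊕ Fin Nc) ℂ :=
      Matrix.fromBlocks F 0 (Gc * H) Fc
    let Ga : Matrix (Fin N ⊕ Fin Nc) (Fin M) ℂ := Matrix.fromRows G Gc
    let Ha : Matrix (Fin M) (Fin N ⊕ Fin Nc) ℂ := Matrix.fromCols H Hc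
    let Pt : Matrix (Fin N ⊕ Fin Nc) (Fin N ⊕ Fin Nc) ℂ :=
      Matrix.fromBlocks Θ 0 0 P₃
    Fa * Pt + Pt * Faᴴ + Ga * Gaᴴ -
      (Ga + Pt * Haᴴ) * Lᴴ * L * (Ga + Pt * Haᴴ)ᴴ = 0 ∧
    Matrix.fromCols C (0 : Matrix (Fin 1) (Fin Nc) ℂ) * Pt * (Matrix.fromCols C (0 : Matrix (Fin 1) (Fin Nc) ℂ))ᴴ
      = C * Θ * Cᴴ := by
  intro Fa Ga Ha Pt
  have hΘH : Θ * Hᴴ = -G := by rw [h2, neg_neg]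
  have hHΘ : H * Θ = -Gᴴ := by
    have := congrArg conjTranspose hΘH
    simpa [conjTranspose_mul, hΘ.eq] using this
  have hrows : Ga + Pt * Haᴴ = fromRows 0 (Gc + P₃ * Hcᴴ) := by
    show fromRows G Gc + fromBlocks Θ 0 0 P₃ * (fromCols H Hc)ᴴ = _
    rw [conjTranspose_fromCols_eq_fromRows_conjTranspose, fromBlocks_mul_fromRows,
      fromRows_add']
    simp [hΘH]
  constructor
  · rw [hrows]
    show fromBlocks F 0 (Gc * H) Fc * fromBlocks Θ 0 0 P₃
        + fromBlocks Θ 0 0 P₃ * (fromBlocks F 0 (Gc * H) Fc)ᴴ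
        + fromRows G Gc * (fromRows G Gc)ᴴ
        - fromRows 0 (Gc + P₃ * Hcᴴ) * Lᴴ * L * (fromRows 0 (Gc + P₃ * Hcᴴ))ᴴ = 0
    rw [conjTranspose_fromRows_eq_fromCols_conjTranspose,
      conjTranspose_fromRows_eq_fromCols_conjTranspose,
      fromRows_mul_fromCols, fromRows_mul, fromRows_mul, fromRows_mul_fromCols,
      fromBlocks_conjTranspose, fromBlocks_multiply, fromBlocks_multiply,
      fromBlocks_add, fromBlocks_add]
    rw [sub_eq_zero, fromBlocks_inj]
    refine ⟨by simpa using h1, ?_, ?_, ?_⟩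
    · simp only [conjTranspose_mul]
      rw [← Matrix.mul_assoc, hΘH]
      simp
    · rw [Matrix.mul_assoc, hHΘ]
      simp
    · rw [sub_eq_zero] at h3
      simpa using h3
  · show fromCols C 0 * fromBlocks Θ 0 0 P₃ * (fromCols C 0)ᴴ = _
    rw [conjTranspose_fromCols_eq_fromRows_conjTranspose, fromCols_mul_fromBlocks,
      fromCols_mul_fromRows]
    simp
end

section
/- Let F, Θ be N×N complex matrices, G₁ and G₂ be N×M complex matrices, and H an M×N complex matrix. Assume Θ is Hermitian, FΘ + ΘF† + G₁G₁† + G₂G₂† = 0, and G₁ = −ΘH†. Then the closed-loop matrices satisfy (F + G₂H)Θ + Θ(F + G₂H)† + (G₁ + G₂)(G₁ + G₂)† = 0. -/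
open Matrix

/-- The (1,1)-block identity in the proof of the paper's
Theorem 4: the closed-loop plant matrices satisfy the Lyapunov-type
physical-realizability relation with the same commutation matrix Θ. -/
theorem closed_loop_lyapunov_identity
    (N M : ℕ)
    (F Θ : Matrix (Fin N) (Fin N) ℂ)
    (G₁ G₂ : Matrix (Fin N) (Fin M) ℂ)
    (H : Matrix (Fin M) (Fin N) ℂ)
    (hΘ : Θ.IsHermitian)
    (h1 : F * Θ + Θ * Fᴴ + G₁ * G₁ᴴ + G₂ * G₂ᴴ = 0)
    (h2 : G₁ = -(Θ * Hᴴ)) :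
    (F + G₂ * H) * Θ + Θ * (F + G₂ * H)ᴴ + (G₁ + G₂) * (G₁ + G₂)ᴴ = 0 := by
  have hG1 : G₁ᴴ = -(H * Θ) := by
    rw [h2]; simp [conjTranspose_mul, hΘ.eq]
  calc (F + G₂ * H) * Θ + Θ * (F + G₂ * H)ᴴ + (G₁ + G₂) * (G₁ + G₂)ᴴ
      = (F * Θ + Θ * Fᴴ + G₁ * G₁ᴴ + G₂ * G₂ᴴ)
        + (G₂ * H * Θ + G₂ * G₁ᴴ) + (Θ * Hᴴ * G₂ᴴ + G₁ * G₂ᴴ) := by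
        simp only [conjTranspose_add, conjTranspose_mul, Matrix.add_mul, Matrix.mul_add,
          Matrix.mul_assoc]
        abel
    _ = 0 := by
        rw [h1, hG1, h2]
        simp [Matrix.mul_neg, Matrix.neg_mul, Matrix.mul_assoc]
end

section
/- Let Θ be an N×N complex matrix, G₁, G₂ be N×M complex matrices, G_{c1}, G_{c2} be N_c×M complex matrices, Θ_c an N_c×N_c complex matrix, and H̃_c an M×N_c complex matrix with G_{c1} = −Θ_cH̃_c†. Define the augmented matrices G_a = [[G₁ + G₂, 0], [G_{c2}, G_{c1}]] (2×2 block matrix), K_a = [0 I] (block row with identity in the second block), H_a = [0 H̃_c] (block row), and P̃ = diag(Θ, Θ_c). Then G_aK_a† + P̃H_a† = 0. -/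
open Matrix

/-- The Kalman gain numerator of the augmented plant-controller
system with coherent feedback vanishes at P̃ = diag(Θ, Θ_c). -/
theorem feedback_kalman_gain_numerator_zero
    (N M Nc : ℕ)
    (Θ : Matrix (Fin N) (Fin N) ℂ)
    (G₁ G₂ : Matrix (Fin N) (Fin M) ℂ)
    (Gc1 Gc2 : Matrix (Fin Nc) (Fin M) ℂ)
    (Θc : Matrix (Fin Nc) (Fin Nc) ℂ)
    (Htc : Matrix (Fin M) (Fin Nc) ℂ)
    (h : Gc1 = -(Θc * Htcᴴ)) :
    let Ga : Matrix (Fin N ⊕ Fin Nc) (Fin M ⊕ Fin M) ℂ :=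
      Matrix.fromBlocks (G₁ + G₂) 0 Gc2 Gc1
    let Ka : Matrix (Fin M) (Fin M ⊕ Fin M) ℂ :=
      Matrix.fromCols 0 (1 : Matrix (Fin M) (Fin M) ℂ)
    let Ha : Matrix (Fin M) (Fin N ⊕ Fin Nc) ℂ := Matrix.fromCols 0 Htc
    let Pt : Matrix (Fin N ⊕ Fin Nc) (Fin N ⊕ Fin Nc) ℂ :=
      Matrix.fromBlocks Θ 0 0 Θc
    Ga * Kaᴴ + Pt * Haᴴ = 0 := by
  intro Ga Ka Ha Pt
  subst h
  ext (i | i) j <;>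
    simp [Ga, Ka, Ha, Pt, mul_apply, Matrix.fromCols, Matrix.fromBlocks,
      Finset.sum_add_distrib, Matrix.one_apply, Finset.sum_ite_eq']
end

section
/- Let F, Θ be N×N complex matrices, G₁, G₂ be N×M complex matrices, H an M×N complex matrix, F_c, Θ_c be N_c×N_c complex matrices, G_{c1}, G_{c2} be N_c×M complex matrices, H_c, H̃_c be M×N_c complex matrices, and C a 1×N complex matrix. Assume: (i) Θ and Θ_c are Hermitian; (ii) FΘ + ΘF† + G₁G₁† + G₂G₂† = 0 and G₁ = −ΘH† (plant physical realizability); (iii) F_cΘ_c + Θ_cF_c† + G_{c1}G_{c1}† + G_{c2}G_{c2}† = 0, G_{c1} = −Θ_cH̃_c†, and G_{c2} = −Θ_cH_c† (controller physical realizability). Define F_a = [[F + G₂H, G₂H_c], [G_{c2}H, F_c]], G_a = [[G₁ + G₂, 0], [G_{c2}, G_{c1}]], H_a = [0 H̃_c], K_a = [0 I], and P̃ = diag(Θ, Θ_c). Then F_aP̃ + P̃F_a† + G_aG_a† = 0 and G_aK_a† + P̃H_a† = 0; in particular, for every p×M complex matrix L, P̃ satisfies the augmented algebraic Riccati equation F_aP̃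 + P̃F_a† + G_aG_a† − (G_aK_a† + P̃H_a†) L† L (G_aK_a† + P̃H_a†)† = 0, and the estimation error cost satisfies [C 0] P̃ [C 0]† = CΘC†. -/
open Matrix

/-- Algebraic core of the paper's Theorem 4: with coherent
feedback and both plant and controller physically realizable
annihilation-operator-only systems, P̃ = diag(Θ, Θ_c) solves the augmented
Riccati equation and the coherent-classical cost equals the purely-classical
cost CΘC†. -/
theorem coherent_classical_feedback_cost
    (N M Nc p : ℕ)
    (F Θ : Matrix (Fin N) (Fin N) ℂ)
    (G₁ G₂ : Matrix (Fin N) (Fin M) ℂ)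
    (H : Matrix (Fin M) (Fin N) ℂ)
    (Fc Θc : Matrix (Fin Nc) (Fin Nc) ℂ)
    (Gc1 Gc2 : Matrix (Fin Nc) (Fin M) ℂ)
    (Hc Htc : Matrix (Fin M) (Fin Nc) ℂ)
    (C : Matrix (Fin 1) (Fin N) ℂ)
    (hΘ : Θ.IsHermitian) (hΘc : Θc.IsHermitian)
    (h1 : F * Θ + Θ * Fᴴ + G₁ * G₁ᴴ + G₂ * G₂ᴴ = 0)
    (h2 : G₁ = -(Θ * Hᴴ))
    (h3 : Fc * Θc + Θc * Fcᴴ + Gc1 * Gc1ᴴ + Gc2 * Gc2ᴴ = 0)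
    (h4 : Gc1 = -(Θc * Htcᴴ))
    (h5 : Gc2 = -(Θc * Hcᴴ)) :
    let Fa : Matrix (Fin N ⊕ Fin Nc) (Fin N ⊕ Fin Nc) ℂ :=
      Matrix.fromBlocks (F + G₂ * H) (G₂ * Hc) (Gc2 * H) Fc
    let Ga : Matrix (Fin N ⊕ Fin Nc) (Fin M ⊕ Fin M) ℂ :=
      Matrix.fromBlocks (G₁ + G₂) 0 Gc2 Gc1
    let Ha : Matrix (Fin M) (Fin N ⊕ Fin Nc) ℂ := Matrix.fromCols 0 Htc
    let Ka : Matrix (Fin M) (Fin M ⊕ Fin M) ℂ :=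
      Matrix.fromCols 0 (1 : Matrix (Fin M) (Fin M) ℂ)
    let Pt : Matrix (Fin N ⊕ Fin Nc) (Fin N ⊕ Fin Nc) ℂ :=
      Matrix.fromBlocks Θ 0 0 Θc
    (Fa * Pt + Pt * Faᴴ + Ga * Gaᴴ = 0 ∧ Ga * Kaᴴ + Pt * Haᴴ = 0) ∧
    (∀ L : Matrix (Fin p) (Fin M) ℂ,
      Fa * Pt + Pt * Faᴴ + Ga * Gaᴴ -
        (Ga * Kaᴴ + Pt * Haᴴ) * Lᴴ * L * (Ga * Kaᴴ + Pt * Haᴴ)ᴴ = 0) ∧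
    Matrix.fromCols C (0 : Matrix (Fin 1) (Fin Nc) ℂ) * Pt * (Matrix.fromCols C (0 : Matrix (Fin 1) (Fin Nc) ℂ))ᴴ
      = C * Θ * Cᴴ := by
  subst h2 h4 h5
  intro Fa Ga Ha Ka Pt
  simp only [conjTranspose_neg, conjTranspose_mul, conjTranspose_conjTranspose,
    hΘ.eq, hΘc.eq] at h1 h3 ⊢
  have key1 : Fa * Pt + Pt * Faᴴ + Ga * Gaᴴ = 0 := by
    simp only [Fa, Ga, Pt, fromBlocks_conjTranspose, fromBlocks_multiply, fromBlocks_add,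
      ← fromBlocks_zero, conjTranspose_add, conjTranspose_neg, conjTranspose_mul,
      conjTranspose_conjTranspose, conjTranspose_zero, hΘ.eq, hΘc.eq]
    refine fromBlocks_inj.mpr ⟨?_, ?_, ?_, ?_⟩
    · rw [← h1]
      simp only [Matrix.add_mul, Matrix.mul_add, Matrix.neg_mul, Matrix.mul_neg, neg_neg,
        Matrix.mul_zero, Matrix.zero_mul, add_zero, zero_add, Matrix.mul_one,
        Matrix.mul_assoc]
      abel
    · simp only [Matrix.add_mul, Matrix.mul_add, Matrix.neg_mul, Matrix.mul_neg, neg_neg,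
        Matrix.mul_zero, Matrix.zero_mul, add_zero, zero_add, Matrix.mul_one,
        Matrix.mul_assoc]
      abel
    · simp only [Matrix.add_mul, Matrix.mul_add, Matrix.neg_mul, Matrix.mul_neg, neg_neg,
        Matrix.mul_zero, Matrix.zero_mul, add_zero, zero_add, Matrix.mul_one,
        Matrix.mul_assoc]
      abel
    · rw [← h3]
      simp only [Matrix.add_mul, Matrix.mul_add, Matrix.neg_mul, Matrix.mul_neg, neg_neg,
        Matrix.mul_zero, Matrix.zero_mul, add_zero, zero_add, Matrix.mul_one,
        Matrix.mul_assoc]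
      abel
  have key2 : Ga * Kaᴴ + Pt * Haᴴ = 0 := by
    simp only [Ga, Ka, Pt, Ha, conjTranspose_fromCols_eq_fromRows_conjTranspose,
      fromBlocks_mul_fromRows, conjTranspose_zero, conjTranspose_one, conjTranspose_neg,
      conjTranspose_mul, conjTranspose_conjTranspose, hΘc.eq, mul_zero, mul_one, zero_add,
      add_zero, zero_mul]
    ext i j
    rcases i with i | i <;> simp
  refine ⟨⟨key1, key2⟩, fun L => by rw [key1, key2]; simp, ?_⟩
  simp only [Pt, conjTranspose_fromCols_eq_fromRows_conjTranspose,
    fromCols_mul_fromBlocks, fromCols_mul_fromRows, conjTranspose_zero,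
    mul_zero, zero_mul, add_zero, zero_add]
  simp
end
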